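/- Let ε with 0 < 8ε ≤ 1, and let (T,ρ) be a standard bubble configuration of type ε: T ⊂ ℂ finite with 0 ∈ T, sup_{z∈T}|z| = ε, ρ : T → [0,∞) with ρ(z) ≤ 4ε for all z, and ρ(x)+ρ(y) ≤ (ε²/4)|x−y| for distinct x,y ∈ T. Let T' ⊂ T with 0 ∈ T' and retraction R : T → T' be such that distinct points of T' are at distance > (4ε³)^{|T'|−1} and d(R(x),x) ≤ (4ε³)^{|T'|} for all x ∈ T. Set k = |T'| and define ρ'(x) = (1/(4ε))·max{ε^{-1}(4ε³)^k, ρ(x)} for x ∈ T'. Then k ≥ 2, the closed discs {B²(x, ρ'(x))}_{x∈T'} are pairwise disjoint and contained in B²(2ε), and in fact for all distinct x, y ∈ T' one has 2ε|x−y| ≥ ρ'(x) + ρ'(y). -/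

import Mathlib

/-- separation in the reduction of a standard bubble configuration
`(T,ρ)` of type ε. With `T' ⊆ T`, the retraction `R`, `k = |T'|` and
`ρ'(x) = (1/(4ε))·max{ε⁻¹(4ε³)^k, ρ(x)}`, one has `k ≥ 2`, the closed discs
`B²(x,ρ'(x))`, `x ∈ T'`, are pairwise disjoint and contained in `B²(2ε)`, and
`2ε|x-y| ≥ ρ'(x) + ρ'(y)` for distinct `x, y ∈ T'`. -/
theorem bubble_reduce_separation (ε : ℝ) (hε0 : 0 < ε) (hε1 : 8 * ε ≤ 1)
    (T : Finset ℂ) (ρ : ℂ → ℝ)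
    (hT0 : (0 : ℂ) ∈ T)
    (hTle : ∀ z ∈ T, ‖z‖ ≤ ε)
    (hTsup : ∃ z ∈ T, ‖z‖ = ε)
    (hρ0 : ∀ z ∈ T, 0 ≤ ρ z)
    (hρ4 : ∀ z ∈ T, ρ z ≤ 4 * ε)
    (hsep : ∀ x ∈ T, ∀ y ∈ T, x ≠ y → ρ x + ρ y ≤ ε ^ 2 / 4 * ‖x - y‖)
    (T' : Finset ℂ) (hT'sub : T' ⊆ T) (hT'0 : (0 : ℂ) ∈ T')
    (R : ℂ → ℂ) (hRmem : ∀ x ∈ T, R x ∈ T') (hRid : ∀ x ∈ T', R x = x)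
    (hT'sep : ∀ x ∈ T', ∀ y ∈ T', x ≠ y →
      (4 * ε ^ 3) ^ (T'.card - 1) < ‖x - y‖)
    (hRclose : ∀ x ∈ T, ‖x - R x‖ ≤ (4 * ε ^ 3) ^ T'.card) :
    let k := T'.card
    let ρ' : ℂ → ℝ := fun x => (1 / (4 * ε)) * max (ε⁻¹ * (4 * ε ^ 3) ^ k) (ρ x)
    2 ≤ k ∧
    (∀ x ∈ T', ∀ y ∈ T', x ≠ y →
      Disjoint (Metric.closedBall x (ρ' x)) (Metric.closedBall y (ρ' y))) ∧
    (∀ x ∈ T', Metric.closedBall x (ρ' x) ⊆ Metric.closedBall (0 : ℂ) (2 * ε)) ∧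
    (∀ x ∈ T', ∀ y ∈ T', x ≠ y → ρ' x + ρ' y ≤ 2 * ε * ‖x - y‖) := by
  intro k ρ'
  have hε8 : ε ≤ 1 / 8 := by linarith
  have hA0 : 0 < 4 * ε ^ 3 := by positivity
  have hεsq : ε ^ 2 ≤ 1 / 64 := by nlinarith
  have hAsmall : 4 * ε ^ 3 ≤ ε / 16 := by nlinarith [mul_le_mul_of_nonneg_left hεsq hε0.le]
  have hA1 : 4 * ε ^ 3 ≤ 1 := by nlinarith
  obtain ⟨z, hzT, hz⟩ := hTsup
  have hk1 : 1 ≤ k := Finset.card_pos.mpr ⟨0, hT'0⟩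
  have hRz : R z ∈ T' := hRmem z hzT
  have hRzne : R z ≠ 0 := by
    intro h
    have h1 := hRclose z hzT
    rw [h, sub_zero, hz] at h1
    have h2 : (4 * ε ^ 3) ^ k ≤ (4 * ε ^ 3) ^ 1 :=
      pow_le_pow_of_le_one hA0.le hA1 hk1
    rw [pow_one] at h2
    linarith
  have hk2 : 2 ≤ k :=
    Finset.one_lt_card.mpr ⟨0, hT'0, R z, hRz, fun h => hRzne h.symm⟩
  -- small bound on ρ on T'
  have hzne : z ≠ 0 := by
    intro h; rw [h] at hz; simp at hz; linarith
  have hρsmall : ∀ x ∈ T', ρ x ≤ ε ^ 3 / 4 := by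
    intro x hx
    have hxT := hT'sub hx
    by_cases h : x = 0
    · subst h
      have hs := hsep 0 hT0 z hzT (Ne.symm hzne)
      have : ‖0 - z‖ = ε := by rw [zero_sub, norm_neg]; exact hz
      rw [this] at hs
      have := hρ0 z hzT
      nlinarith
    · have hs := hsep x hxT 0 hT0 h
      rw [sub_zero] at hs
      have h1 := hTle x hxT
      have h2 := hρ0 0 hT0
      have h3 : (0:ℝ) ≤ ‖x‖ := norm_nonneg _
      nlinarith
  -- bound ρ' ≤ ε on T'
  have hρ'le : ∀ x ∈ T', ρ' x ≤ ε := by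
    intro x hx
    have h1 : (4 * ε ^ 3) ^ k ≤ (4 * ε ^ 3) ^ 2 :=
      pow_le_pow_of_le_one hA0.le hA1 hk2
    have h2 : ε⁻¹ * (4 * ε ^ 3) ^ k ≤ ε ^ 3 / 4 := by
      rw [inv_mul_le_iff₀ hε0]
      calc (4 * ε ^ 3) ^ k ≤ (4 * ε ^ 3) ^ 2 := h1
        _ = 16 * ε ^ 6 := by ring
        _ ≤ ε * (ε ^ 3 / 4) := by nlinarith
    have h3 : max (ε⁻¹ * (4 * ε ^ 3) ^ k) (ρ x) ≤ ε ^ 3 / 4 :=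
      max_le h2 (hρsmall x hx)
    have h4 : (0:ℝ) < 4 * ε := by positivity
    show (1 / (4 * ε)) * max (ε⁻¹ * (4 * ε ^ 3) ^ k) (ρ x) ≤ ε
    calc (1 / (4 * ε)) * max (ε⁻¹ * (4 * ε ^ 3) ^ k) (ρ x)
        ≤ (1 / (4 * ε)) * (ε ^ 3 / 4) := by
          apply mul_le_mul_of_nonneg_left h3 (by positivity)
      _ = ε ^ 2 / 16 := by field_simp; ring
      _ ≤ ε := by nlinarith
  -- key separation
  have hkey : ∀ x ∈ T', ∀ y ∈ T', x ≠ y →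
      ρ' x + ρ' y ≤ 2 * ε * ‖x - y‖ := by
    intro x hx y hy hxy
    set d : ℝ := ‖x - y‖ with hd
    have hdpos : (4 * ε ^ 3) ^ (k - 1) < d := hT'sep x hx y hy hxy
    have hd0 : 0 < d := lt_of_lt_of_le (by positivity) hdpos.le
    have hAk : (4 * ε ^ 3) ^ k = (4 * ε ^ 3) ^ (k - 1) * (4 * ε ^ 3) := by
      rw [← pow_succ, Nat.sub_add_cancel hk1]
    have hbound : ∀ w ∈ T', w = x ∨ w = y →
        max (ε⁻¹ * (4 * ε ^ 3) ^ k) (ρ w) ≤ 4 * ε ^ 2 * d := by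
      intro w hw hwxy
      apply max_le
      · rw [inv_mul_le_iff₀ hε0, hAk]
        have : (4 * ε ^ 3) ^ (k - 1) * (4 * ε ^ 3) ≤ d * (4 * ε ^ 3) :=
          mul_le_mul_of_nonneg_right hdpos.le hA0.le
        nlinarith
      · have hs := hsep x (hT'sub hx) y (hT'sub hy) hxy
        have h1 := hρ0 x (hT'sub hx)
        have h2 := hρ0 y (hT'sub hy)
        rw [← hd] at hs
        rcases hwxy with h | h <;> subst h <;> nlinarith
    have hbx := hbound x hx (Or.inl rfl)
    have hby := hbound y hy (Or.inr rfl)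
    show (1 / (4 * ε)) * max (ε⁻¹ * (4 * ε ^ 3) ^ k) (ρ x) +
        (1 / (4 * ε)) * max (ε⁻¹ * (4 * ε ^ 3) ^ k) (ρ y) ≤ 2 * ε * d
    have h4 : (0:ℝ) < 4 * ε := by positivity
    have := add_le_add (mul_le_mul_of_nonneg_left hbx (by positivity : (0:ℝ) ≤ 1 / (4 * ε)))
      (mul_le_mul_of_nonneg_left hby (by positivity : (0:ℝ) ≤ 1 / (4 * ε)))
    calc (1 / (4 * ε)) * max (ε⁻¹ * (4 * ε ^ 3) ^ k) (ρ x) +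
        (1 / (4 * ε)) * max (ε⁻¹ * (4 * ε ^ 3) ^ k) (ρ y)
        ≤ (1 / (4 * ε)) * (4 * ε ^ 2 * d) + (1 / (4 * ε)) * (4 * ε ^ 2 * d) := this
      _ = 2 * ε * d := by field_simp; ring
  refine ⟨hk2, ?_, ?_, hkey⟩
  · intro x hx y hy hxy
    apply Metric.closedBall_disjoint_closedBall
    have h1 := hkey x hx y hy hxy
    have hd : dist x y = ‖x - y‖ := dist_eq_norm x y
    have hdpos : (4 * ε ^ 3) ^ (k - 1) < ‖x - y‖ := hT'sep x hx y hy hxy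
    have hd0 : (0:ℝ) < ‖x - y‖ := lt_of_lt_of_le (by positivity) hdpos.le
    rw [hd]
    nlinarith
  · intro x hx
    apply Metric.closedBall_subset_closedBall'
    have h1 := hρ'le x hx
    have h2 : dist x 0 = ‖x‖ := by rw [dist_eq_norm, sub_zero]
    have h3 := hTle x (hT'sub hx)
    rw [h2]; linarith
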